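/- Let A be the real 4×4 matrix with rows (0, 1, 0, 0), (0, 0, 0, −1), (0, 0, 0, 0), (0, −1, −1, 0). Then for every t ∈ ℝ, the matrix exponential exp(t A) equals the 4×4 matrix with rows (1, sinh t, sinh t − t, 1 − cosh t), (0, cosh t, cosh t − 1, −sinh t), (0, 0, 1, 0), (0, −sinh t, −sinh t, cosh t). (Explicit solution of the state–adjoint system of the double integrator optimal control problem.) -/

import Mathlib

set_option maxHeartbeats 1000000

open Real

theorem exp_sq_zero' {𝔸 : Type*} [Ring 𝔸] [TopologicalSpace 𝔸] [IsTopologicalRing 𝔸]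
    [Algebra ℝ 𝔸] [T2Space 𝔸] (x : 𝔸) (hx : x ^ 2 = 0) :
    NormedSpace.exp x = 1 + x := by
  rw [NormedSpace.exp_eq_tsum ℝ]
  have h : ∀ n ∉ ({0, 1} : Finset ℕ), (((n.factorial : ℝ))⁻¹ • x ^ n) = 0 := by
    intro n hn
    simp only [Finset.mem_insert, Finset.mem_singleton] at hn
    rw [show x ^ n = x ^ 2 * x ^ (n - 2) by rw [← pow_add]; congr 1; omega, hx, zero_mul,
      smul_zero]
  beta_reduce
  rw [tsum_eq_sum h]
  simp [Finset.sum_insert]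

theorem double_integrator_state_adjoint_exp
    (A : Matrix (Fin 4) (Fin 4) ℝ)
    (hA : A = !![0, 1, 0, 0; 0, 0, 0, -1; 0, 0, 0, 0; 0, -1, -1, 0]) :
    ∀ t : ℝ,
      NormedSpace.exp (t • A) =
        !![1, sinh t, sinh t - t, 1 - cosh t;
           0, cosh t, cosh t - 1, -sinh t;
           0, 0, 1, 0;
           0, -sinh t, -sinh t, cosh t] := by
  intro t
  subst hA
  set Q : Matrix (Fin 4) (Fin 4) ℝ := !![1,1,1,0; 1,-1,0,1; 0,0,0,-1; -1,-1,0,0] with hQ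
  set Qi : Matrix (Fin 4) (Fin 4) ℝ :=
    !![0,1/2,1/2,-1/2; 0,-1/2,-1/2,-1/2; 1,0,0,1; 0,0,-1,0] with hQi
  have hQQi : Q * Qi = 1 := by
    ext i j
    fin_cases i <;> fin_cases j <;>
      simp [hQ, hQi, Matrix.mul_apply, Fin.sum_univ_succ, Matrix.vecHead, Matrix.vecTail, Function.comp] <;> norm_num
  have hQiQ : Qi * Q = 1 := by
    ext i j
    fin_cases i <;> fin_cases j <;>
      simp [hQ, hQi, Matrix.mul_apply, Fin.sum_univ_succ, Matrix.vecHead, Matrix.vecTail, Function.comp] <;> norm_num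
  set U : (Matrix (Fin 4) (Fin 4) ℝ)ˣ := ⟨Q, Qi, hQQi, hQiQ⟩ with hU
  set D : Matrix (Fin 4) (Fin 4) ℝ := Matrix.diagonal ![t, -t, 0, 0] with hD
  set N : Matrix (Fin 4) (Fin 4) ℝ := !![0,0,-t,0; 0,0,0,0; 0,0,0,0; 0,0,0,0] with hN
  set S : Matrix (Fin 4) (Fin 4) ℝ :=
    !![0, t, t, 0; 0, 0, 0, -t; 0, 0, 0, 0; 0, -t, -t, 0] with hS
  have hQD : Q * D = !![t,-t,0,0; t,t,0,0; 0,0,0,0; -t,t,0,0] := by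
    rw [hQ, hD]
    ext i j
    fin_cases i <;> fin_cases j <;>
      simp [Matrix.mul_diagonal, Matrix.vecHead, Matrix.vecTail, Function.comp] <;> ring
  have hSval : S = Q * D * Qi := by
    rw [hQD, hS, hQi]
    ext i j
    fin_cases i <;> fin_cases j <;>
      simp [Matrix.mul_apply, Fin.sum_univ_succ, Matrix.vecHead, Matrix.vecTail, Function.comp] <;> ring
  have hsplit : t • (!![0, 1, 0, 0; 0, 0, 0, -1; 0, 0, 0, 0; 0, -1, -1, 0] :
      Matrix (Fin 4) (Fin 4) ℝ) = S + N := by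
    rw [hS, hN]
    ext i j
    fin_cases i <;> fin_cases j <;> simp [Matrix.vecHead, Matrix.vecTail, Function.comp] <;> ring
  have hcomm : Commute S N := by
    rw [hS, hN]
    show _ * _ = _ * _
    ext i j
    fin_cases i <;> fin_cases j <;>
      simp [Matrix.mul_apply, Fin.sum_univ_succ, Matrix.vecHead, Matrix.vecTail, Function.comp] <;> ring
  have hN2 : N ^ 2 = 0 := by
    rw [hN, pow_two]
    ext i j
    fin_cases i <;> fin_cases j <;> simp [Matrix.mul_apply, Fin.sum_univ_succ, Matrix.vecHead, Matrix.vecTail, Function.comp]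
  have hexpN : NormedSpace.exp N = 1 + N := exp_sq_zero' N hN2
  have hexpD : NormedSpace.exp D = Matrix.diagonal ![Real.exp t, Real.exp (-t), 1, 1] := by
    rw [hD, Matrix.exp_diagonal]
    ext i j
    fin_cases i <;> fin_cases j <;>
      simp [Matrix.diagonal_apply, ← Real.exp_eq_exp_ℝ]
  have hconj : NormedSpace.exp (Q * D * Qi) = Q * NormedSpace.exp D * Qi :=
    Matrix.exp_units_conj U D
  have hexpS : NormedSpace.exp S =
      Q * Matrix.diagonal ![Real.exp t, Real.exp (-t), 1, 1] * Qi := by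
    rw [hSval, hconj, hexpD]
  set E : Matrix (Fin 4) (Fin 4) ℝ := Matrix.diagonal ![Real.exp t, Real.exp (-t), 1, 1]
    with hE
  set a := Real.exp t with ha
  set b := Real.exp (-t) with hb
  have hQE : Q * E = !![a, b, 1, 0; a, -b, 0, 1; 0, 0, 0, -1; -a, -b, 0, 0] := by
    rw [hQ, hE]
    ext i j
    fin_cases i <;> fin_cases j <;>
      simp [Matrix.mul_diagonal, Matrix.vecHead, Matrix.vecTail, Function.comp] <;> ring
  have hF : Q * E * Qi =
      !![1, a/2 - b/2, a/2 - b/2, 1 - a/2 - b/2;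
         0, a/2 + b/2, a/2 + b/2 - 1, -a/2 + b/2;
         0, 0, 1, 0;
         0, -a/2 + b/2, -a/2 + b/2, a/2 + b/2] := by
    rw [hQE, hQi]
    ext i j
    fin_cases i <;> fin_cases j <;>
      simp [Matrix.mul_apply, Fin.sum_univ_succ, Matrix.vecHead, Matrix.vecTail,
        Function.comp] <;> ring
  have hFN : (!![1, a/2 - b/2, a/2 - b/2, 1 - a/2 - b/2;
         0, a/2 + b/2, a/2 + b/2 - 1, -a/2 + b/2;
         0, 0, 1, 0;
         0, -a/2 + b/2, -a/2 + b/2, a/2 + b/2] : Matrix (Fin 4) (Fin 4) ℝ) * N =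
      !![0, 0, -t, 0; 0, 0, 0, 0; 0, 0, 0, 0; 0, 0, 0, 0] := by
    rw [hN]
    ext i j
    fin_cases i <;> fin_cases j <;>
      simp [Matrix.mul_apply, Fin.sum_univ_succ, Matrix.vecHead, Matrix.vecTail,
        Function.comp] <;> ring
  rw [hsplit, Matrix.exp_add_of_commute S N hcomm, hexpN, hexpS, mul_add,
    mul_one, hF, hFN]
  ext i j
  fin_cases i <;> fin_cases j <;>
    simp [Real.cosh_eq, Real.sinh_eq, ha, hb, Matrix.vecHead, Matrix.vecTail,
      Function.comp] <;> ring
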